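/- Let τ̄ > 1 and c > 0 and define y_{k,n,m} = (n - m - k τ̄)/√k. There exists a constant C (depending on c and τ̄) such that for all n ≥ 1, sup_{0 ≤ m ≤ √n} ∑_{k=1}^{n} (1/√k) |√(n/(k τ̄)) - 1| e^{-c y_{k,n,m}²} ≤ C/√n. -/

import Mathlib

set_option maxHeartbeats 1000000

open Finset

lemma aux_geom (q : ℝ) (h0 : 0 ≤ q) (h1 : q < 1) (N : ℕ) :
    ∑ j ∈ Finset.range N, q ^ j ≤ 1 / (1 - q) := by
  have := Summable.sum_le_tsum (Finset.range N) (fun i _ => pow_nonneg h0 i)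
    (summable_geometric_of_lt_one h0 h1)
  rw [tsum_geometric_of_lt_one h0 h1] at this
  simpa [one_div] using this

lemma aux_one_div_one_sub (r : ℝ) (hr : 0 < r) :
    1 / (1 - Real.exp (-r)) ≤ 1 + 1/r := by
  have h1 : Real.exp (-r) ≤ 1 / (1 + r) := by
    rw [Real.exp_neg]
    rw [inv_eq_one_div]
    apply one_div_le_one_div_of_le (by linarith)
    linarith [Real.add_one_le_exp r]
  have h2 : r / (1 + r) ≤ 1 - Real.exp (-r) := by
    have : 1 - 1/(1+r) = r/(1+r) := by field_simp; ring
    linarith [this]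
  have h3 : (0:ℝ) < r / (1+r) := by positivity
  calc 1 / (1 - Real.exp (-r)) ≤ 1 / (r/(1+r)) := one_div_le_one_div_of_le h3 h2
    _ = (1+r)/r := by field_simp
    _ ≤ 1 + 1/r := by rw [add_div]; rw [div_self hr.ne']; ring_nf; exact le_refl _

lemma aux_abs_exp_sum (r t : ℝ) (hr : 0 < r) (ht : 0 ≤ t) (n : ℕ) :
    ∑ k ∈ Finset.Icc 1 n, Real.exp (-(r * |(k:ℝ) - t|)) ≤ 2 * (1 + 1/r) := by
  classical
  set q := Real.exp (-r) with hq
  have hq0 : 0 ≤ q := (Real.exp_pos _).le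
  have hq1 : q < 1 := by rw [hq]; exact Real.exp_lt_one_iff.mpr (by linarith)
  have hpow : ∀ e : ℕ, q ^ e = Real.exp (-(r * e)) := by
    intro e
    rw [hq, ← Real.exp_nat_mul]
    congr 1; ring
  set k₀ := ⌈t⌉₊ with hk₀
  have htk : t ≤ (k₀ : ℝ) := Nat.le_ceil t
  have htk1 : (k₀ : ℝ) < t + 1 := Nat.ceil_lt_add_one ht
  rw [← Finset.sum_filter_add_sum_filter_not (Finset.Icc 1 n) (fun k => k < k₀)]
  have hs1 : ∑ k ∈ (Finset.Icc 1 n).filter (fun k => k < k₀),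
      Real.exp (-(r * |(k:ℝ) - t|)) ≤ 1/(1-q) := by
    calc ∑ k ∈ (Finset.Icc 1 n).filter (fun k => k < k₀), Real.exp (-(r * |(k:ℝ) - t|))
        ≤ ∑ k ∈ (Finset.Icc 1 n).filter (fun k => k < k₀), q ^ (k₀ - 1 - k) := by
          apply Finset.sum_le_sum
          intro k hk
          simp only [Finset.mem_filter, Finset.mem_Icc] at hk
          have hkk : k ≤ k₀ - 1 := by omega
          have hcast : ((k₀ - 1 - k : ℕ) : ℝ) = (k₀ : ℝ) - 1 - k := by
            have h1 : 1 ≤ k₀ := by omega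
            push_cast [Nat.cast_sub (by omega : k ≤ k₀ - 1), Nat.cast_sub h1]
            ring
          rw [hpow, Real.exp_le_exp, hcast]
          have hklt : (k:ℝ) ≤ (k₀:ℝ) - 1 := by
            have : (k:ℝ) + 1 ≤ k₀ := by exact_mod_cast hk.2
            linarith
          have habs : |(k:ℝ) - t| = t - (k:ℝ) := by
            rw [abs_of_nonpos (by linarith)]; ring
          rw [habs]
          nlinarith
      _ ≤ ∑ k ∈ Finset.Ico 1 k₀, q ^ (k₀ - 1 - k) := by
          apply Finset.sum_le_sum_of_subset_of_nonneg
          · intro k hk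
            simp only [Finset.mem_filter, Finset.mem_Icc] at hk
            simp only [Finset.mem_Ico]
            omega
          · intro k _ _; positivity
      _ = ∑ j ∈ Finset.range (k₀ - 1), q ^ (k₀ - 1 - (1 + j)) := by
          rw [Finset.sum_Ico_eq_sum_range]
      _ = ∑ j ∈ Finset.range (k₀ - 1), q ^ j := by
          rw [← Finset.sum_range_reflect]
          apply Finset.sum_congr rfl
          intro j hj
          simp only [Finset.mem_range] at hj
          congr 1
          omega
      _ ≤ 1/(1-q) := aux_geom q hq0 hq1 _
  have hs2 : ∑ k ∈ (Finset.Icc 1 n).filter (fun k => ¬ k < k₀),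
      Real.exp (-(r * |(k:ℝ) - t|)) ≤ 1/(1-q) := by
    calc ∑ k ∈ (Finset.Icc 1 n).filter (fun k => ¬ k < k₀), Real.exp (-(r * |(k:ℝ) - t|))
        ≤ ∑ k ∈ (Finset.Icc 1 n).filter (fun k => ¬ k < k₀), q ^ (k - k₀) := by
          apply Finset.sum_le_sum
          intro k hk
          simp only [Finset.mem_filter, Finset.mem_Icc, not_lt] at hk
          have hcast : ((k - k₀ : ℕ) : ℝ) = (k : ℝ) - k₀ := by
            push_cast [Nat.cast_sub hk.2]; ring
          rw [hpow, Real.exp_le_exp, hcast]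
          have : (k:ℝ) - t ≤ |(k:ℝ) - t| := le_abs_self _
          nlinarith
      _ ≤ ∑ k ∈ Finset.Ico k₀ (n+1), q ^ (k - k₀) := by
          apply Finset.sum_le_sum_of_subset_of_nonneg
          · intro k hk
            simp only [Finset.mem_filter, Finset.mem_Icc, not_lt] at hk
            simp only [Finset.mem_Ico]
            omega
          · intro k _ _; positivity
      _ = ∑ j ∈ Finset.range (n + 1 - k₀), q ^ (k₀ + j - k₀) := by
          rw [Finset.sum_Ico_eq_sum_range]
      _ = ∑ j ∈ Finset.range (n + 1 - k₀), q ^ j := by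
          apply Finset.sum_congr rfl
          intro j _
          congr 1
          omega
      _ ≤ 1/(1-q) := aux_geom q hq0 hq1 _
  have := aux_one_div_one_sub r hr
  linarith

lemma aux_exp_sq (d x : ℝ) (hd : 0 ≤ d) (hx : 0 ≤ x) :
    Real.exp (-(d * x^2)) ≤ Real.exp (1/4) * Real.exp (-(Real.sqrt d * x)) := by
  rw [← Real.exp_add]
  apply Real.exp_le_exp.mpr
  have h := sq_nonneg (Real.sqrt d * x - 1/2)
  have h2 : Real.sqrt d ^ 2 = d := Real.sq_sqrt hd
  nlinarith

lemma aux_gauss_sum (δ τ t : ℝ) (hδ : 0 < δ) (hτ : 0 < τ) (ht : 0 ≤ t) (n : ℕ) :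
    ∑ k ∈ Finset.Icc 1 n, Real.exp (-(δ * ((k:ℝ)*τ - t*τ)^2))
      ≤ Real.exp (1/4) * (2 * (1 + 1/(τ * Real.sqrt δ))) := by
  have hsd : Real.sqrt (δ * τ^2) = τ * Real.sqrt δ := by
    rw [mul_comm δ (τ^2), Real.sqrt_mul (by positivity), Real.sqrt_sq hτ.le]
  calc ∑ k ∈ Finset.Icc 1 n, Real.exp (-(δ * ((k:ℝ)*τ - t*τ)^2))
      ≤ ∑ k ∈ Finset.Icc 1 n, Real.exp (1/4) * Real.exp (-((τ * Real.sqrt δ) * |(k:ℝ) - t|)) := by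
        apply Finset.sum_le_sum
        intro k _
        have harg : -(δ * ((k:ℝ)*τ - t*τ)^2) = -((δ * τ^2) * |(k:ℝ) - t|^2) := by
          rw [sq_abs]; ring
        rw [harg, ← hsd]
        exact aux_exp_sq _ _ (by positivity) (abs_nonneg _)
    _ = Real.exp (1/4) * ∑ k ∈ Finset.Icc 1 n, Real.exp (-((τ * Real.sqrt δ) * |(k:ℝ) - t|)) := by
        rw [Finset.mul_sum]
    _ ≤ Real.exp (1/4) * (2 * (1 + 1/(τ * Real.sqrt δ))) := by
        apply mul_le_mul_of_nonneg_left _ (Real.exp_pos _).le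
        exact aux_abs_exp_sum _ t (by positivity) ht n

lemma aux_le_of_sq (x y : ℝ) (hy : 0 ≤ y) (h : x^2 ≤ y^2) : x ≤ y := by nlinarith

lemma aux_term_bound (τbar c : ℝ) (hτ : 1 < τbar) (hc : 0 < c)
    (n k : ℕ) (hn : 4 ≤ n) (hk1 : 1 ≤ k) (hkn : k ≤ n) (a : ℝ)
    (ha2 : (n:ℝ)/2 ≤ a) (han : (n:ℝ) - a ≤ Real.sqrt n) (ha_le : a ≤ n) :
    (1 / Real.sqrt k) * |Real.sqrt ((n : ℝ) / (k * τbar)) - 1| *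
      Real.exp (-c * ((a - k * τbar) / Real.sqrt k) ^ 2)
    ≤ (((2*Real.sqrt τbar + 64/c)/Real.sqrt c + (4*τbar + 64/c)) / n) *
      Real.exp (-(c/(4*(n:ℝ))) * (a - k*τbar)^2) := by
  have hk0 : (0:ℝ) < k := by exact_mod_cast hk1
  have hn0 : (0:ℝ) < n := by positivity
  have hkr : (1:ℝ) ≤ k := by exact_mod_cast hk1
  have hnk : (k:ℝ) ≤ n := by exact_mod_cast hkn
  have hn1 : (1:ℝ) ≤ n := by linarith only [hkr, hnk]
  set sk := Real.sqrt k with hsk_def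
  set sn := Real.sqrt n with hsn_def
  set z := a - (k:ℝ) * τbar with hz_def
  set E := Real.exp (-c * (z / sk) ^ 2) with hE_def
  set G := Real.exp (-(c/2 * z^2 / (k:ℝ))) with hG_def
  set h := Real.exp (-(c/(4*(n:ℝ))) * z^2) with hh_def
  set u := Real.sqrt ((n:ℝ) / ((k:ℝ) * τbar)) with hu_def
  clear_value sk sn z E G h u
  have hsk : 0 < sk := by rw [hsk_def]; positivity
  have hsn : 0 < sn := by rw [hsn_def]; positivity
  have hsk2 : sk^2 = (k:ℝ) := by rw [hsk_def]; exact Real.sq_sqrt hk0.le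
  have hsn2 : sn^2 = (n:ℝ) := by rw [hsn_def]; exact Real.sq_sqrt hn0.le
  have hsksn : sk ≤ sn := by rw [hsk_def, hsn_def]; exact Real.sqrt_le_sqrt hnk
  have hsc : 0 < Real.sqrt c := Real.sqrt_pos.mpr hc
  have hsc2 : Real.sqrt c ^ 2 = c := Real.sq_sqrt hc.le
  have hstb : 0 < Real.sqrt τbar := Real.sqrt_pos.mpr (by linarith only [hτ])
  have hstb2 : Real.sqrt τbar ^ 2 = τbar := Real.sq_sqrt (by linarith only [hτ])
  have hEpos : 0 < E := by rw [hE_def]; positivity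
  have hGpos : 0 < G := by rw [hG_def]; positivity
  have hhpos : 0 < h := by rw [hh_def]; positivity
  have hE_eq : E = Real.exp (-(c * z^2 / (k:ℝ))) := by
    rw [hE_def]; congr 1; rw [div_pow, hsk2]; ring
  have hu0 : 0 ≤ u := by rw [hu_def]; positivity
  have hu2 : u^2 = (n:ℝ) / ((k:ℝ)*τbar) := by rw [hu_def]; exact Real.sq_sqrt (by positivity)
  have hukt : u^2 * ((k:ℝ)*τbar) = (n:ℝ) := by
    rw [hu2]; field_simp
  have hD : sk*sn ≤ ((k:ℝ)*τbar)*(u+1) := by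
    have h1 : sk*sn ≤ ((k:ℝ)*τbar)*u := by
      apply aux_le_of_sq _ _ (by positivity)
      have heq : (((k:ℝ)*τbar)*u)^2 = ((k:ℝ)*τbar) * (u^2 * ((k:ℝ)*τbar)) := by ring
      rw [heq, hukt, mul_pow, hsk2, hsn2]
      nlinarith only [mul_nonneg (mul_nonneg hk0.le hn0.le)
        (by linarith only [hτ] : (0:ℝ) ≤ τbar - 1)]
    have hpos : (0:ℝ) < (k:ℝ)*τbar := by positivity
    have h2 := mul_le_mul_of_nonneg_left (show u ≤ u + 1 by linarith only) hpos.le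
    linarith only [h1, h2]
  have habs : |u - 1| * (((k:ℝ)*τbar)*(u+1)) = |(n:ℝ) - (k:ℝ)*τbar| := by
    rw [← abs_of_pos (show (0:ℝ) < ((k:ℝ)*τbar)*(u+1) by positivity), ← abs_mul]
    congr 1
    linear_combination hukt
  have hnkt : |(n:ℝ) - (k:ℝ)*τbar| ≤ |z| + sn := by
    have he : (n:ℝ) - (k:ℝ)*τbar = z + ((n:ℝ) - a) := by rw [hz_def]; ring
    rw [he]
    have h1 := abs_add_le z ((n:ℝ) - a)
    have h2 : |(n:ℝ) - a| = (n:ℝ) - a := abs_of_nonneg (by linarith only [ha_le])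
    rw [h2] at h1
    linarith only [h1, han]
  have hu_bd : |u - 1| ≤ (|z| + sn)/(sk*sn) := by
    rw [le_div_iff₀ (by positivity)]
    calc |u-1| * (sk*sn) ≤ abs (u-1) * (((k:ℝ)*τbar)*(u+1)) := by
          apply mul_le_mul_of_nonneg_left hD (abs_nonneg _)
      _ = |(n:ℝ) - (k:ℝ)*τbar| := habs
      _ ≤ |z| + sn := hnkt
  have hkeq : (k:ℝ) = sk*sk := by rw [← hsk2]; ring
  have hT : (1/sk) * |u-1| * E ≤ (|z| * E)/((k:ℝ)*sn) + E/(k:ℝ) := by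
    have h1 : (1/sk) * |u-1| * E ≤ (1/sk) * ((|z| + sn)/(sk*sn)) * E := by
      apply mul_le_mul_of_nonneg_right _ hEpos.le
      apply mul_le_mul_of_nonneg_left hu_bd (by positivity)
    have h2 : (1/sk) * ((|z| + sn)/(sk*sn)) * E = (|z| * E)/((k:ℝ)*sn) + E/(k:ℝ) := by
      rw [hkeq]; field_simp
    linarith only [h1, h2]
  have hEG : E ≤ G := by
    rw [hE_eq, hG_def]
    apply Real.exp_le_exp.mpr
    have h0 : (0:ℝ) ≤ c/2*z^2/(k:ℝ) := by positivity
    have e : c * z^2/(k:ℝ) = c/2*z^2/(k:ℝ) + c/2*z^2/(k:ℝ) := by ring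
    linarith only [h0, e]
  have hzE : |z| * E ≤ (sk/Real.sqrt c) * G := by
    have hs2 : (Real.sqrt c * |z|/sk)^2 = c*z^2/(k:ℝ) := by
      rw [div_pow, mul_pow, hsc2, sq_abs, hsk2]
    have hkey : Real.sqrt c * |z| / sk ≤ Real.exp (c/2 * z^2 / (k:ℝ)) := by
      have h1 : Real.sqrt c * |z| / sk ≤ 1 + (c*z^2/(k:ℝ))/2 := by
        nlinarith only [sq_nonneg (Real.sqrt c * |z|/sk - 1), hs2]
      have e : c/2 * z^2 / (k:ℝ) = (c*z^2/(k:ℝ))/2 := by ring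
      linarith only [h1, e, Real.add_one_le_exp (c/2 * z^2 / (k:ℝ))]
    have h2 : |z| ≤ (sk/Real.sqrt c) * Real.exp (c/2 * z^2 / (k:ℝ)) := by
      rw [div_mul_eq_mul_div, le_div_iff₀ hsc]
      calc |z| * Real.sqrt c = (Real.sqrt c * |z| / sk) * sk := by field_simp
        _ ≤ Real.exp (c/2 * z^2 / (k:ℝ)) * sk := mul_le_mul_of_nonneg_right hkey hsk.le
        _ = sk * Real.exp (c/2 * z^2 / (k:ℝ)) := by ring
    calc |z| * E ≤ ((sk/Real.sqrt c) * Real.exp (c/2 * z^2 / (k:ℝ))) * E :=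
          mul_le_mul_of_nonneg_right h2 hEpos.le
      _ = (sk/Real.sqrt c) * G := by
          rw [hE_eq, hG_def, mul_assoc, ← Real.exp_add]
          congr 2
          ring
  have hF1 : (|z| * E)/((k:ℝ)*sn) ≤ G/(Real.sqrt c*sk*sn) := by
    have h1 : (|z| * E)/((k:ℝ)*sn) ≤ ((sk/Real.sqrt c)*G)/((k:ℝ)*sn) :=
      div_le_div₀ (by positivity) hzE (by positivity) le_rfl
    have h2 : ((sk/Real.sqrt c)*G)/((k:ℝ)*sn) = G/(Real.sqrt c*sk*sn) := by
      rw [hkeq]; field_simp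
    linarith only [h1, h2]
  have hp1 : (|z| * E)/((k:ℝ)*sn) ≤ (2*Real.sqrt τbar + 64/c)/Real.sqrt c/(n:ℝ) * h ∧
      E/(k:ℝ) ≤ (4*τbar + 64/c)/(n:ℝ) * h := by
    by_cases hcase : a ≤ 2*τbar*(k:ℝ)
    · -- k large
      have hnle : (n:ℝ) ≤ 4*τbar*(k:ℝ) := by linarith only [ha2, hcase]
      have hG_h : G ≤ h := by
        rw [hG_def, hh_def]
        apply Real.exp_le_exp.mpr
        have h3 : (c*z^2)/(4*(n:ℝ)) ≤ (c*z^2)/(2*(k:ℝ)) :=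
          div_le_div_of_nonneg_left (by positivity) (by linarith only [hk0])
            (by linarith only [hnk])
        have e6 : (c*z^2)/(2*(k:ℝ)) = c/2*z^2/(k:ℝ) := by ring
        have e7 : (c*z^2)/(4*(n:ℝ)) = c/(4*(n:ℝ))*z^2 := by ring
        linarith only [h3, e6, e7]
      have hsn_sk : sn ≤ 2*Real.sqrt τbar * sk := by
        apply aux_le_of_sq _ _ (by positivity)
        rw [mul_pow, mul_pow, hstb2, hsk2, hsn2]
        linarith only [hnle]
      have hd1 : 1/(Real.sqrt c*sk*sn) ≤ (2*Real.sqrt τbar)/(Real.sqrt c*(n:ℝ)) := by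
        rw [div_le_div_iff₀ (by positivity) (by positivity)]
        have hkey : (n:ℝ) ≤ 2*Real.sqrt τbar*(sk*sn) := by
          nlinarith only [hsn_sk, hsn.le, hsn2]
        have h5 := mul_le_mul_of_nonneg_left hkey hsc.le
        linarith only [h5]
      have hd2 : 1/(k:ℝ) ≤ 4*τbar/(n:ℝ) := by
        rw [div_le_div_iff₀ hk0 hn0]; linarith only [hnle]
      constructor
      · calc (|z| * E)/((k:ℝ)*sn) ≤ G/(Real.sqrt c*sk*sn) := hF1
          _ = G * (1/(Real.sqrt c*sk*sn)) := by ring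
          _ ≤ h * ((2*Real.sqrt τbar)/(Real.sqrt c*(n:ℝ))) :=
              mul_le_mul hG_h hd1 (by positivity) hhpos.le
          _ = (2*Real.sqrt τbar)/Real.sqrt c/(n:ℝ) * h := by ring
          _ ≤ (2*Real.sqrt τbar + 64/c)/Real.sqrt c/(n:ℝ) * h := by
              have h64 : (0:ℝ) ≤ 64/c := by positivity
              gcongr
              linarith only [h64]
      · calc E/(k:ℝ) = E * (1/(k:ℝ)) := by ring
          _ ≤ h * (4*τbar/(n:ℝ)) :=
              mul_le_mul (le_trans hEG hG_h) hd2 (by positivity) hhpos.le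
          _ = 4*τbar/(n:ℝ) * h := by ring
          _ ≤ (4*τbar + 64/c)/(n:ℝ) * h := by
              have h64 : (0:ℝ) ≤ 64/c := by positivity
              gcongr
              linarith only [h64]
    · -- k small, z large
      push_neg at hcase
      have hz4 : (n:ℝ)/4 ≤ z := by
        rw [hz_def]; linarith only [hcase, ha2]
      have hzpos : (0:ℝ) < z := by linarith only [hz4, hn0]
      have hz2 : (n:ℝ)^2/16 ≤ z^2 := by nlinarith only [hz4, hn0.le]
      have hGB : G ≤ (64*(k:ℝ)/(c*(n:ℝ)^2)) * h := by
        have hsplit : G = Real.exp (-(c/4 * z^2 / (k:ℝ))) * Real.exp (-(c/4 * z^2 / (k:ℝ))) := by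
          rw [hG_def, ← Real.exp_add]; congr 1; ring
        have hf1 : Real.exp (-(c/4 * z^2 / (k:ℝ))) ≤ h := by
          rw [hh_def]
          apply Real.exp_le_exp.mpr
          have h3 : (c*z^2)/(4*(n:ℝ)) ≤ (c*z^2)/(4*(k:ℝ)) :=
            div_le_div_of_nonneg_left (by positivity) (by linarith only [hk0])
              (by linarith only [hnk])
          have e6 : (c*z^2)/(4*(k:ℝ)) = c/4*z^2/(k:ℝ) := by ring
          have e7 : (c*z^2)/(4*(n:ℝ)) = c/(4*(n:ℝ))*z^2 := by ring
          linarith only [h3, e6, e7]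
        have hx : (0:ℝ) < c/4 * z^2/(k:ℝ) :=
          div_pos (mul_pos (by linarith only [hc]) (pow_pos hzpos 2)) hk0
        have hf2 : Real.exp (-(c/4 * z^2 / (k:ℝ))) ≤ 64*(k:ℝ)/(c*(n:ℝ)^2) := by
          have hexp : Real.exp (-(c/4*z^2/(k:ℝ))) ≤ 1/(c/4*z^2/(k:ℝ)) := by
            rw [Real.exp_neg, inv_eq_one_div]
            apply one_div_le_one_div_of_le hx
            linarith only [Real.add_one_le_exp (c/4*z^2/(k:ℝ))]
          have he : 1/(c/4*z^2/(k:ℝ)) = 4*(k:ℝ)/(c*z^2) := by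
            field_simp [hzpos.ne', hc.ne', hk0.ne']
          rw [he] at hexp
          refine le_trans hexp ?_
          rw [div_le_div_iff₀ (by positivity) (by positivity)]
          have h6 := mul_le_mul_of_nonneg_left hz2 (mul_nonneg hc.le hk0.le)
          linarith only [h6]
        calc G = Real.exp (-(c/4 * z^2 / (k:ℝ))) * Real.exp (-(c/4 * z^2 / (k:ℝ))) := hsplit
          _ ≤ h * (64*(k:ℝ)/(c*(n:ℝ)^2)) :=
              mul_le_mul hf1 hf2 (Real.exp_pos _).le hhpos.le
          _ = (64*(k:ℝ)/(c*(n:ℝ)^2)) * h := by ring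
      have hns : (n:ℝ) ≤ (n:ℝ)^2 := by nlinarith only [hn1]
      constructor
      · have hch : G/(Real.sqrt c*sk*sn) ≤ ((64*(k:ℝ)/(c*(n:ℝ)^2)) * h)/(Real.sqrt c*sk*sn) :=
          div_le_div₀ (by positivity) hGB (by positivity) le_rfl
        have heq : ((64*(k:ℝ)/(c*(n:ℝ)^2)) * h)/(Real.sqrt c*sk*sn)
            = (64/(c*(n:ℝ)^2*Real.sqrt c)) * (sk/sn) * h := by
          rw [hkeq]; field_simp
        have hsks : sk/sn ≤ 1 := by
          rw [div_le_one hsn]; exact hsksn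
        have h1 : (64/(c*(n:ℝ)^2*Real.sqrt c)) * (sk/sn) * h
            ≤ (64/(c*(n:ℝ)^2*Real.sqrt c)) * 1 * h := by
          apply mul_le_mul_of_nonneg_right _ hhpos.le
          exact mul_le_mul_of_nonneg_left hsks (by positivity)
        have h2 : 64/(c*(n:ℝ)^2*Real.sqrt c) ≤ (2*Real.sqrt τbar + 64/c)/Real.sqrt c/(n:ℝ) := by
          rw [div_div, div_le_div_iff₀ (by positivity) (by positivity)]
          have e5 : (2*Real.sqrt τbar + 64/c)*(c*(n:ℝ)^2*Real.sqrt c)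
              = 2*Real.sqrt τbar*(c*(n:ℝ)^2*Real.sqrt c) + 64*((n:ℝ)^2*Real.sqrt c) := by
            field_simp
          rw [e5]
          have h6 := mul_le_mul_of_nonneg_right hns hsc.le
          have h7 : (0:ℝ) ≤ 2*Real.sqrt τbar*(c*(n:ℝ)^2*Real.sqrt c) := by positivity
          linarith only [h6, h7]
        have h3 : (64/(c*(n:ℝ)^2*Real.sqrt c)) * 1 * h
            ≤ (2*Real.sqrt τbar + 64/c)/Real.sqrt c/(n:ℝ) * h := by
          apply mul_le_mul_of_nonneg_right _ hhpos.le
          rw [mul_one]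
          exact h2
        calc (|z| * E)/((k:ℝ)*sn) ≤ G/(Real.sqrt c*sk*sn) := hF1
          _ ≤ ((64*(k:ℝ)/(c*(n:ℝ)^2)) * h)/(Real.sqrt c*sk*sn) := hch
          _ = (64/(c*(n:ℝ)^2*Real.sqrt c)) * (sk/sn) * h := heq
          _ ≤ (64/(c*(n:ℝ)^2*Real.sqrt c)) * 1 * h := h1
          _ ≤ (2*Real.sqrt τbar + 64/c)/Real.sqrt c/(n:ℝ) * h := h3
      · have h1 : E/(k:ℝ) ≤ ((64*(k:ℝ)/(c*(n:ℝ)^2)) * h)/(k:ℝ) :=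
          div_le_div₀ (by positivity) (le_trans hEG hGB) hk0 le_rfl
        have heq2 : ((64*(k:ℝ)/(c*(n:ℝ)^2)) * h)/(k:ℝ) = (64/(c*(n:ℝ)^2)) * h := by
          field_simp
        have h2 : (64/(c*(n:ℝ)^2)) * h ≤ (4*τbar + 64/c)/(n:ℝ) * h := by
          apply mul_le_mul_of_nonneg_right _ hhpos.le
          rw [div_le_div_iff₀ (by positivity) hn0]
          have e4 : (4*τbar + 64/c)*(c*(n:ℝ)^2) = 4*τbar*(c*(n:ℝ)^2) + 64*(n:ℝ)^2 := by
            field_simp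
          rw [e4]
          have h6 := mul_le_mul_of_nonneg_left hns (by norm_num : (0:ℝ) ≤ 64)
          have h7 : (0:ℝ) ≤ 4*τbar*(c*(n:ℝ)^2) := by positivity
          linarith only [h6, h7]
        calc E/(k:ℝ) ≤ ((64*(k:ℝ)/(c*(n:ℝ)^2)) * h)/(k:ℝ) := h1
          _ = (64/(c*(n:ℝ)^2)) * h := heq2
          _ ≤ (4*τbar + 64/c)/(n:ℝ) * h := h2
  obtain ⟨hp1a, hp1b⟩ := hp1
  have hcomb : (2*Real.sqrt τbar + 64/c)/Real.sqrt c/(n:ℝ) * h + (4*τbar + 64/c)/(n:ℝ) * h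
      = ((2*Real.sqrt τbar + 64/c)/Real.sqrt c + (4*τbar + 64/c))/(n:ℝ) * h := by ring
  linarith only [hT, hp1a, hp1b, hcomb]

theorem sum_sqrt_diff_exp_bound (τbar c : ℝ) (hτ : 1 < τbar) (hc : 0 < c) :
    ∃ C : ℝ, 0 < C ∧ ∀ n : ℕ, 1 ≤ n → ∀ m : ℕ, (m : ℝ) ≤ Real.sqrt n →
      ∑ k ∈ Finset.Icc 1 n,
          (1 / Real.sqrt k) * |Real.sqrt ((n : ℝ) / (k * τbar)) - 1| *
            Real.exp (-c * (((n : ℝ) - m - k * τbar) / Real.sqrt k) ^ 2)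
        ≤ C / Real.sqrt n := by
  have hτ0 : 0 < τbar := by linarith
  have hsc : 0 < Real.sqrt c := Real.sqrt_pos.mpr hc
  refine ⟨((2*Real.sqrt τbar + 64/c)/Real.sqrt c + (4*τbar + 64/c)) *
      (Real.exp (1/4) * (2 * (1 + 2/(τbar*Real.sqrt c)))) + 18, by positivity, ?_⟩
  intro n hn m hm
  have hn0 : (0:ℝ) < n := by exact_mod_cast Nat.lt_of_lt_of_le Nat.zero_lt_one hn
  have hsn : 0 < Real.sqrt n := Real.sqrt_pos.mpr hn0
  have hsn2 : (Real.sqrt n)^2 = (n:ℝ) := Real.sq_sqrt hn0.le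
  have hsn1 : 1 ≤ Real.sqrt n := by
    rw [show (1:ℝ) = Real.sqrt 1 from (Real.sqrt_one).symm]
    exact Real.sqrt_le_sqrt (by exact_mod_cast hn)
  have hKpos : (0:ℝ) < ((2*Real.sqrt τbar + 64/c)/Real.sqrt c + (4*τbar + 64/c)) := by positivity
  by_cases hn4 : 4 ≤ n
  · -- main case
    have hsn_half : Real.sqrt n ≤ (n:ℝ)/2 := by
      have h2 : (2:ℝ) ≤ Real.sqrt n := by
        have h4 : Real.sqrt 4 ≤ Real.sqrt n := Real.sqrt_le_sqrt (by exact_mod_cast hn4)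
        rwa [show Real.sqrt 4 = 2 by
          rw [show (4:ℝ) = 2^2 by norm_num, Real.sqrt_sq (by norm_num)]] at h4
      nlinarith only [hsn2, hsn.le, h2]
    have hm0 : (0:ℝ) ≤ m := Nat.cast_nonneg m
    have ha2 : (n:ℝ)/2 ≤ (n:ℝ) - m := by linarith only [hm, hsn_half]
    have han : (n:ℝ) - ((n:ℝ) - m) ≤ Real.sqrt n := by
      have : (n:ℝ) - ((n:ℝ) - m) = m := by ring
      rw [this]; exact hm
    have ha_le : (n:ℝ) - m ≤ (n:ℝ) := by linarith only [hm0]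
    have hts : ((((n:ℝ) - m)/τbar))*τbar = (n:ℝ) - m := by field_simp
    calc ∑ k ∈ Finset.Icc 1 n,
          (1 / Real.sqrt k) * |Real.sqrt ((n : ℝ) / (k * τbar)) - 1| *
            Real.exp (-c * (((n : ℝ) - m - k * τbar) / Real.sqrt k) ^ 2)
        ≤ ∑ k ∈ Finset.Icc 1 n,
            (((2*Real.sqrt τbar + 64/c)/Real.sqrt c + (4*τbar + 64/c)) / n) *
              Real.exp (-(c/(4*(n:ℝ))) * (((n:ℝ) - m) - k*τbar)^2) := by
          apply Finset.sum_le_sum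
          intro k hk
          rw [Finset.mem_Icc] at hk
          exact aux_term_bound τbar c hτ hc n k hn4 hk.1 hk.2 ((n:ℝ) - m) ha2 han ha_le
      _ = (((2*Real.sqrt τbar + 64/c)/Real.sqrt c + (4*τbar + 64/c)) / n) *
            ∑ k ∈ Finset.Icc 1 n,
              Real.exp (-((c/(4*(n:ℝ))) * ((k:ℝ)*τbar - (((n:ℝ) - m)/τbar)*τbar)^2)) := by
          rw [Finset.mul_sum]
          apply Finset.sum_congr rfl
          intro k _
          congr 2
          rw [hts]
          ring
      _ ≤ (((2*Real.sqrt τbar + 64/c)/Real.sqrt c + (4*τbar + 64/c)) / n) *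
            (Real.exp (1/4) * (2 * (1 + 1/(τbar * Real.sqrt (c/(4*(n:ℝ))))))) := by
          apply mul_le_mul_of_nonneg_left _ (by positivity)
          exact aux_gauss_sum (c/(4*(n:ℝ))) τbar (((n:ℝ) - m)/τbar) (by positivity) hτ0
            (div_nonneg (by linarith only [ha2, hn0]) hτ0.le) n
      _ ≤ (((2*Real.sqrt τbar + 64/c)/Real.sqrt c + (4*τbar + 64/c)) / n) *
            ((Real.exp (1/4) * (2 * (1 + 2/(τbar*Real.sqrt c)))) * Real.sqrt n) := by
          apply mul_le_mul_of_nonneg_left _ (by positivity)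
          have hsd : Real.sqrt (c/(4*(n:ℝ))) = Real.sqrt c/(2*Real.sqrt n) := by
            rw [show c/(4*(n:ℝ)) = c/(4*(n:ℝ)) from rfl]
            rw [Real.sqrt_div hc.le]
            congr 1
            rw [show (4:ℝ)*(n:ℝ) = 2^2*(n:ℝ) by norm_num, Real.sqrt_mul (by positivity),
              Real.sqrt_sq (by norm_num)]
          rw [hsd]
          have he1 : 1/(τbar * (Real.sqrt c/(2*Real.sqrt n))) = 2*Real.sqrt n/(τbar*Real.sqrt c) := by
            field_simp
          rw [he1]
          have he2 : (Real.exp (1/4) * (2 * (1 + 2/(τbar*Real.sqrt c)))) * Real.sqrt n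
              = Real.exp (1/4) * (2 * (Real.sqrt n + 2*Real.sqrt n/(τbar*Real.sqrt c))) := by
            field_simp
          rw [he2]
          have he3 : 1 + 2*Real.sqrt n/(τbar*Real.sqrt c)
              ≤ Real.sqrt n + 2*Real.sqrt n/(τbar*Real.sqrt c) := by
            linarith only [hsn1]
          have hexp14 : (0:ℝ) ≤ Real.exp (1/4) := (Real.exp_pos _).le
          nlinarith only [he3, hexp14, Real.exp_pos (1/4:ℝ)]
      _ = (((2*Real.sqrt τbar + 64/c)/Real.sqrt c + (4*τbar + 64/c)) *
            (Real.exp (1/4) * (2 * (1 + 2/(τbar*Real.sqrt c))))) / Real.sqrt n := by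
          obtain ⟨s, hs_eq⟩ : ∃ s:ℝ, Real.sqrt (n:ℝ) = s := ⟨_, rfl⟩
          have hs_mul : s*s = (n:ℝ) := by rw [← hs_eq]; exact Real.mul_self_sqrt hn0.le
          have hs0 : (0:ℝ) < s := hs_eq ▸ hsn
          rw [hs_eq, ← hs_mul]
          field_simp
      _ ≤ (((2*Real.sqrt τbar + 64/c)/Real.sqrt c + (4*τbar + 64/c)) *
            (Real.exp (1/4) * (2 * (1 + 2/(τbar*Real.sqrt c)))) + 18) / Real.sqrt n := by
          gcongr
          norm_num
  · -- small n
    push_neg at hn4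
    have hn3 : n ≤ 3 := by omega
    have hsn_le2 : Real.sqrt n ≤ 2 := by
      have h4 : Real.sqrt n ≤ Real.sqrt 4 := Real.sqrt_le_sqrt (by exact_mod_cast le_of_lt hn4)
      rwa [show Real.sqrt 4 = 2 by
        rw [show (4:ℝ) = 2^2 by norm_num, Real.sqrt_sq (by norm_num)]] at h4
    have hterm : ∀ k ∈ Finset.Icc 1 n,
        (1 / Real.sqrt k) * |Real.sqrt ((n : ℝ) / (k * τbar)) - 1| *
          Real.exp (-c * (((n : ℝ) - m - k * τbar) / Real.sqrt k) ^ 2) ≤ 3 := by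
      intro k hk
      rw [Finset.mem_Icc] at hk
      have hk1 : (1:ℝ) ≤ k := by exact_mod_cast hk.1
      have hsk1 : 1 ≤ Real.sqrt k := by
        rw [show (1:ℝ) = Real.sqrt 1 from (Real.sqrt_one).symm]
        exact Real.sqrt_le_sqrt hk1
      have h1 : 1/Real.sqrt k ≤ 1 := by
        rw [div_le_one (by linarith only [hsk1])]
        linarith only [hsk1]
      have hx0 : 0 ≤ Real.sqrt ((n:ℝ)/(k*τbar)) := Real.sqrt_nonneg _
      have hx : Real.sqrt ((n:ℝ)/((k:ℝ)*τbar)) ≤ Real.sqrt n := by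
        apply Real.sqrt_le_sqrt
        apply div_le_self hn0.le
        nlinarith only [hk1, hτ]
      have habs : |Real.sqrt ((n:ℝ)/((k:ℝ)*τbar)) - 1| ≤ Real.sqrt n + 1 := by
        rw [abs_le]
        constructor
        · linarith only [hx0, hsn.le]
        · linarith only [hx]
      have hexp : Real.exp (-c * (((n : ℝ) - m - k * τbar) / Real.sqrt k) ^ 2) ≤ 1 := by
        rw [Real.exp_le_one_iff]
        have := sq_nonneg (((n : ℝ) - m - k * τbar) / Real.sqrt k)
        nlinarith only [this, hc.le]
      calc (1 / Real.sqrt k) * |Real.sqrt ((n : ℝ) / (k * τbar)) - 1| *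
            Real.exp (-c * (((n : ℝ) - m - k * τbar) / Real.sqrt k) ^ 2)
          ≤ (1 * (Real.sqrt n + 1)) * 1 := by
            apply mul_le_mul _ hexp (Real.exp_pos _).le (by positivity)
            apply mul_le_mul h1 habs (abs_nonneg _) (by norm_num)
        _ = Real.sqrt n + 1 := by ring
        _ ≤ 3 := by linarith only [hsn_le2]
    have hsum : ∑ k ∈ Finset.Icc 1 n,
        (1 / Real.sqrt k) * |Real.sqrt ((n : ℝ) / (k * τbar)) - 1| *
          Real.exp (-c * (((n : ℝ) - m - k * τbar) / Real.sqrt k) ^ 2)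
        ≤ ∑ k ∈ Finset.Icc 1 n, (3:ℝ) := Finset.sum_le_sum hterm
    have hcard : ∑ k ∈ Finset.Icc 1 n, (3:ℝ) = 3*n := by
      rw [Finset.sum_const, Nat.card_Icc]
      simp
      ring
    have h9 : (9:ℝ) ≤ 18/Real.sqrt n := by
      rw [le_div_iff₀ hsn]
      nlinarith only [hsn_le2]
    have h18 : 18/Real.sqrt n ≤ (((2*Real.sqrt τbar + 64/c)/Real.sqrt c + (4*τbar + 64/c)) *
        (Real.exp (1/4) * (2 * (1 + 2/(τbar*Real.sqrt c)))) + 18) / Real.sqrt n := by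
      have hKK : (0:ℝ) ≤ ((2*Real.sqrt τbar + 64/c)/Real.sqrt c + (4*τbar + 64/c)) *
          (Real.exp (1/4) * (2 * (1 + 2/(τbar*Real.sqrt c)))) := by positivity
      gcongr
      linarith only [hKK]
    have hn3' : (n:ℝ) ≤ 3 := by exact_mod_cast hn3
    calc ∑ k ∈ Finset.Icc 1 n,
          (1 / Real.sqrt k) * |Real.sqrt ((n : ℝ) / (k * τbar)) - 1| *
            Real.exp (-c * (((n : ℝ) - m - k * τbar) / Real.sqrt k) ^ 2)
        ≤ 3*(n:ℝ) := by rw [← hcard]; exact hsum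
      _ ≤ 9 := by linarith only [hn3']
      _ ≤ 18/Real.sqrt n := h9
      _ ≤ _ := h18
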